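/- For all n and all subsets T of [n], the number of inversion sequences of length n whose set of occurrence positions of the consecutive pattern 2100 is exactly T equals the number of inversion sequences of length n whose set of occurrence positions of the consecutive pattern 2210 is exactly T. -/
import Mathlib


/-- Inversion sequences of length `n` (0-indexed: entry `i` lies in `Fin (i+1)`). -/
abbrev InvSeq (n : ℕ) := ∀ i : Fin n, Fin (i.val + 1)

/-- The entry of an inversion sequence at position `i`, as a natural number. -/
def ev {n : ℕ} (e : InvSeq n) (i : ℕ) : ℕ := if h : i < n then (e ⟨i, h⟩ : ℕ) else 0

/-- Positions of occurrences of the consecutive pattern 2100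
(`e i > e (i+1) > e (i+2) = e (i+3)`). -/
def Em2100 {n : ℕ} (e : InvSeq n) : Set ℕ :=
  {i | i + 3 < n ∧ ev e (i+1) < ev e i ∧ ev e (i+2) < ev e (i+1) ∧ ev e (i+2) = ev e (i+3)}

/-- Positions of occurrences of the consecutive pattern 2210
(`e i = e (i+1) > e (i+2) > e (i+3)`). -/
def Em2210 {n : ℕ} (e : InvSeq n) : Set ℕ :=
  {i | i + 3 < n ∧ ev e i = ev e (i+1) ∧ ev e (i+2) < ev e (i+1) ∧ ev e (i+3) < ev e (i+2)}

namespace SSW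

attribute [local instance] Classical.propDecidable

/-- The "cut" predicate: positions that are endpoints of pieces. -/
def Cut (n : ℕ) (y : ℕ → ℕ) (S : Set ℕ) (p : ℕ) : Prop :=
  p = 0 ∨ n ≤ p + 1 ∨ y (p-1) < y p ∨ y p < y (p+1) ∨ p ∈ S ∨ (3 ≤ p ∧ p - 3 ∈ S)

noncomputable def piL (n : ℕ) (y : ℕ → ℕ) (S : Set ℕ) (p : ℕ) : ℕ :=
  Nat.findGreatest (Cut n y S) (p - 1)

lemma piR_ex (n : ℕ) (y : ℕ → ℕ) (S : Set ℕ) (p : ℕ) : ∃ c, p < c ∧ Cut n y S c := by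
  refine ⟨max (p+1) n, ?_, Or.inr (Or.inl ?_)⟩
  · have := le_max_left (p+1) n; omega
  · have := le_max_right (p+1) n; omega

noncomputable def piR (n : ℕ) (y : ℕ → ℕ) (S : Set ℕ) (p : ℕ) : ℕ :=
  Nat.find (piR_ex n y S p)

/-- The transform: reversal-complement on each piece. -/
noncomputable def tf (n : ℕ) (y : ℕ → ℕ) (S : Set ℕ) (p : ℕ) : ℕ :=
  if Cut n y S p then y p
  else y (piL n y S p) + y (piR n y S p) - y (piL n y S p + piR n y S p - p)

section Basic

variable (n : ℕ) (y : ℕ → ℕ) (S : Set ℕ)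

lemma cut_zero : Cut n y S 0 := Or.inl rfl

lemma cut_of_big {p : ℕ} (h : n ≤ p + 1) : Cut n y S p := Or.inr (Or.inl h)

lemma cut_of_mem {p : ℕ} (h : p ∈ S) : Cut n y S p :=
  Or.inr (Or.inr (Or.inr (Or.inr (Or.inl h))))

lemma cut_of_mem3 {p : ℕ} (h : p ∈ S) : Cut n y S (p + 3) := by
  refine Or.inr (Or.inr (Or.inr (Or.inr (Or.inr ⟨by omega, ?_⟩))))
  rw [Nat.add_sub_cancel]; exact h

lemma cut_of_asc1 {p : ℕ} (h : y p < y (p+1)) : Cut n y S p :=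
  Or.inr (Or.inr (Or.inr (Or.inl h)))

lemma cut_of_asc2 {p : ℕ} (h : y p < y (p+1)) : Cut n y S (p+1) := by
  refine Or.inr (Or.inr (Or.inl ?_))
  rw [Nat.add_sub_cancel]; exact h

variable {n y S}

lemma not_cut_pos {p : ℕ} (hp : ¬ Cut n y S p) : p ≠ 0 :=
  fun h => hp (Or.inl h)

lemma not_cut_lt {p : ℕ} (hp : ¬ Cut n y S p) : p + 1 < n := by
  by_contra h; exact hp (cut_of_big n y S (by omega))

lemma piL_lt {p : ℕ} (hp : ¬ Cut n y S p) : piL n y S p < p := by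
  have h1 := Nat.findGreatest_le (P := Cut n y S) (p - 1)
  have h2 := not_cut_pos hp
  unfold piL; omega

lemma cut_piL (p : ℕ) : Cut n y S (piL n y S p) :=
  Nat.findGreatest_spec (Nat.zero_le _) (cut_zero n y S)

lemma piL_ge {p c : ℕ} (hc : Cut n y S c) (h : c < p) : c ≤ piL n y S p :=
  Nat.le_findGreatest (by omega) hc

lemma piL_max {p c : ℕ} (hp : ¬ Cut n y S p) (h1 : piL n y S p < c) (h2 : c < p) :
    ¬ Cut n y S c :=
  Nat.findGreatest_is_greatest h1 (by omega)

lemma lt_piR (p : ℕ) : p < piR n y S p := (Nat.find_spec (piR_ex n y S p)).1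

lemma cut_piR (p : ℕ) : Cut n y S (piR n y S p) := (Nat.find_spec (piR_ex n y S p)).2

lemma piR_le {p c : ℕ} (h1 : p < c) (hc : Cut n y S c) : piR n y S p ≤ c :=
  Nat.find_min' _ ⟨h1, hc⟩

lemma piR_min {p c : ℕ} (h1 : p < c) (h2 : c < piR n y S p) : ¬ Cut n y S c :=
  fun hc => Nat.find_min (piR_ex n y S p) h2 ⟨h1, hc⟩

lemma no_int {p c : ℕ} (hp : ¬ Cut n y S p) (h1 : piL n y S p < c) (h2 : c < piR n y S p) :
    ¬ Cut n y S c := by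
  rcases lt_trichotomy c p with h | h | h
  · exact piL_max hp h1 h
  · subst h; exact hp
  · exact piR_min h h2

lemma piece_piL {p q : ℕ} (hp : ¬ Cut n y S p) (hq : ¬ Cut n y S q)
    (h1 : piL n y S p < q) (h2 : q < piR n y S p) : piL n y S q = piL n y S p := by
  refine le_antisymm ?_ (piL_ge (cut_piL p) h1)
  by_contra h
  push_neg at h
  exact no_int hp h (lt_trans (piL_lt hq) h2) (cut_piL q)

lemma piece_piR {p q : ℕ} (hp : ¬ Cut n y S p) (hq : ¬ Cut n y S q)
    (h1 : piL n y S p < q) (h2 : q < piR n y S p) : piR n y S q = piR n y S p := by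
  refine le_antisymm (piR_le h2 (cut_piR p)) ?_
  by_contra h
  push_neg at h
  exact no_int hp (lt_trans h1 (lt_piR q)) h (cut_piR q)

lemma piece_mono {p t : ℕ} (hp : ¬ Cut n y S p) (h1 : piL n y S p ≤ t) (h2 : t < piR n y S p) :
    ¬ (y t < y (t+1)) := by
  intro hasc
  have c1 : Cut n y S t := cut_of_asc1 n y S hasc
  have c2 : Cut n y S (t+1) := cut_of_asc2 n y S hasc
  have hL := piL_lt hp
  have hR := lt_piR (n := n) (y := y) (S := S) p
  rcases eq_or_lt_of_le (show t + 1 ≤ piR n y S p by omega) with h | h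
  · -- t+1 = piR, so t = piR - 1
    rcases eq_or_lt_of_le h1 with h' | h'
    · omega
    · exact no_int hp h' (by omega) c1
  · exact no_int hp (by omega) h c2

lemma piece_anti {p u v : ℕ} (hp : ¬ Cut n y S p) (h1 : piL n y S p ≤ u) (h2 : u ≤ v)
    (h3 : v ≤ piR n y S p) : y v ≤ y u := by
  induction v, h2 using Nat.le_induction with
  | base => exact le_rfl
  | succ v hv ih =>
    have hm := piece_mono hp (show piL n y S p ≤ v by omega) (show v < piR n y S p by omega)
    have := ih (by omega)
    omega

lemma tf_of_cut {p : ℕ} (h : Cut n y S p) : tf n y S p = y p := if_pos h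

lemma tf_of_not_cut {p : ℕ} (h : ¬ Cut n y S p) :
    tf n y S p = y (piL n y S p) + y (piR n y S p) - y (piL n y S p + piR n y S p - p) :=
  if_neg h

lemma tf_formula {p u : ℕ} (hp : ¬ Cut n y S p) (h1 : piL n y S p ≤ u) (h2 : u ≤ piR n y S p) :
    tf n y S u = y (piL n y S p) + y (piR n y S p) - y (piL n y S p + piR n y S p - u) := by
  rcases eq_or_lt_of_le h1 with h | h
  · rw [← h, show piL n y S p + piR n y S p - piL n y S p = piR n y S p by omega,
      tf_of_cut (cut_piL p)]
    omega
  · rcases eq_or_lt_of_le h2 with h' | h'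
    · rw [h', show piL n y S p + piR n y S p - piR n y S p = piL n y S p by omega,
        tf_of_cut (cut_piR p)]
      have := piL_lt hp
      have := lt_piR (n := n) (y := y) (S := S) p
      omega
    · have hu : ¬ Cut n y S u := no_int hp h h'
      unfold tf
      rw [if_neg hu, piece_piL hp hu h h', piece_piR hp hu h h']

end Basic


section Invol

variable {n : ℕ} {y : ℕ → ℕ} {S : Set ℕ}

lemma tf_le_piL {p : ℕ} (hp : ¬ Cut n y S p) : tf n y S p ≤ y (piL n y S p) := by
  have hf := tf_formula hp (le_of_lt (piL_lt hp)) (le_of_lt (lt_piR p))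
  have h1 : y (piR n y S p) ≤ y (piL n y S p + piR n y S p - p) := by
    refine piece_anti hp ?_ ?_ le_rfl <;>
      [skip; skip] <;>
      · have := piL_lt hp; have := lt_piR (n := n) (y := y) (S := S) p; omega
  omega

lemma piR_le_tf {p : ℕ} (hp : ¬ Cut n y S p) : y (piR n y S p) ≤ tf n y S p := by
  have hf := tf_formula hp (le_of_lt (piL_lt hp)) (le_of_lt (lt_piR p))
  have h1 : y (piL n y S p + piR n y S p - p) ≤ y (piL n y S p) := by
    refine piece_anti hp le_rfl ?_ ?_ <;>
      · have := piL_lt hp; have := lt_piR (n := n) (y := y) (S := S) p; omega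
  omega

lemma tf_le_self (hy : ∀ q, y q ≤ q) (p : ℕ) : tf n y S p ≤ p := by
  by_cases hp : Cut n y S p
  · rw [tf_of_cut hp]; exact hy p
  · have h1 := tf_le_piL hp
    have h2 := hy (piL n y S p)
    have h3 := piL_lt hp
    omega

lemma asc_tf_iff (t : ℕ) : tf n y S t < tf n y S (t+1) ↔ y t < y (t+1) := by
  by_cases h1 : Cut n y S t <;> by_cases h2 : Cut n y S (t+1)
  · rw [tf_of_cut h1, tf_of_cut h2]
  · -- t cut, t+1 not cut
    have hal : piL n y S (t+1) = t := by
      have ha := Nat.findGreatest_le (P := Cut n y S) (t + 1 - 1)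
      have hb := piL_ge (p := t+1) h1 (by omega)
      unfold piL at *
      omega
    constructor
    · intro h
      exfalso
      have := tf_le_piL h2
      rw [hal, tf_of_cut h1] at *
      omega
    · intro h
      exact absurd (cut_of_asc2 n y S h) h2
  · -- t not cut, t+1 cut
    have hbe : piR n y S t = t + 1 := le_antisymm (piR_le (by omega) h2) (lt_piR t)
    constructor
    · intro h
      exfalso
      have := piR_le_tf h1
      rw [hbe, tf_of_cut h2] at *
      omega
    · intro h
      exact absurd (cut_of_asc1 n y S h) h1
  · -- both not cut
    have hR : t + 1 < piR n y S t := by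
      have ha := lt_piR (n := n) (y := y) (S := S) t
      have hb := cut_piR (n := n) (y := y) (S := S) t
      rcases eq_or_lt_of_le (show t + 1 ≤ piR n y S t by omega) with h | h
      · rw [← h] at hb; exact absurd hb h2
      · exact h
    have hL := piL_lt h1
    have f0 := tf_formula h1 (u := t) (by omega) (by omega)
    have f1 := tf_formula h1 (u := t+1) (by omega) (by omega)
    have hanti : y (piL n y S t + piR n y S t - t) ≤ y (piL n y S t + piR n y S t - (t+1)) := by
      refine piece_anti h1 ?_ ?_ ?_ <;> omega
    have hbound : y (piL n y S t + piR n y S t - t) ≤ y (piL n y S t) := by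
      refine piece_anti h1 le_rfl ?_ ?_ <;> omega
    have hmono := piece_mono h1 (show piL n y S t ≤ t by omega) (show t < piR n y S t by omega)
    constructor
    · intro h; omega
    · intro h; exact absurd h hmono

lemma cut_tf_iff (p : ℕ) : Cut n (tf n y S) S p ↔ Cut n y S p := by
  by_cases h0 : p = 0
  · subst h0; constructor <;> intro _ <;> exact Or.inl rfl
  · have e1 : p - 1 + 1 = p := by omega
    have h3 := asc_tf_iff (n := n) (y := y) (S := S) (p-1)
    have h4 := asc_tf_iff (n := n) (y := y) (S := S) p
    rw [e1] at h3
    unfold Cut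
    rw [h3, h4]

lemma findGreatest_congr {P Q : ℕ → Prop} [DecidablePred P] [DecidablePred Q]
    (h : ∀ k, P k ↔ Q k) : ∀ b, Nat.findGreatest P b = Nat.findGreatest Q b
  | 0 => rfl
  | b+1 => by
    rw [Nat.findGreatest_succ, Nat.findGreatest_succ, findGreatest_congr h b]
    by_cases hb : Q (b+1)
    · rw [if_pos ((h _).mpr hb), if_pos hb]
    · rw [if_neg (fun hh => hb ((h _).mp hh)), if_neg hb]

lemma piL_tf_eq (p : ℕ) : piL n (tf n y S) S p = piL n y S p :=
  findGreatest_congr (fun k => cut_tf_iff k) _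

lemma piR_tf_eq (p : ℕ) : piR n (tf n y S) S p = piR n y S p := by
  refine le_antisymm (Nat.find_min' _ ?_) (Nat.find_min' _ ?_)
  · have h := Nat.find_spec (piR_ex n y S p)
    exact ⟨h.1, (cut_tf_iff _).mpr h.2⟩
  · have h := Nat.find_spec (piR_ex n (tf n y S) S p)
    exact ⟨h.1, (cut_tf_iff _).mp h.2⟩

lemma tf_tf (p : ℕ) : tf n (tf n y S) S p = y p := by
  by_cases hp : Cut n y S p
  · rw [tf_of_cut ((cut_tf_iff p).mpr hp), tf_of_cut hp]
  · have hp' : ¬ Cut n (tf n y S) S p := fun h => hp ((cut_tf_iff p).mp h)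
    rw [tf_of_not_cut hp', piL_tf_eq, piR_tf_eq]
    have hL := piL_lt hp
    have hR := lt_piR (n := n) (y := y) (S := S) p
    rw [tf_of_cut (cut_piL p), tf_of_cut (cut_piR p),
      tf_formula hp (u := piL n y S p + piR n y S p - p) (by omega) (by omega),
      show piL n y S p + piR n y S p - (piL n y S p + piR n y S p - p) = p by omega]
    have h1 : y p ≤ y (piL n y S p) := piece_anti hp le_rfl (by omega) (by omega)
    have h2 : y (piL n y S p + piR n y S p - p) ≤ y (piL n y S p) :=
      piece_anti hp le_rfl (by omega) (by omega)
    omega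

end Invol


section Anchor

variable {n : ℕ} {y : ℕ → ℕ} {S : Set ℕ}

lemma anchor_piL1 {q : ℕ} (hc0 : Cut n y S q) (hc1 : ¬ Cut n y S (q+1)) :
    piL n y S (q+1) = q := by
  have h1 : piL n y S (q+1) ≤ q := by
    have := Nat.findGreatest_le (P := Cut n y S) (q + 1 - 1)
    unfold piL; omega
  have h2 := piL_ge (p := q+1) hc0 (by omega)
  omega

lemma anchor_piR1 {q : ℕ} (hc3 : Cut n y S (q+3)) (hc2 : ¬ Cut n y S (q+2)) :
    piR n y S (q+1) = q + 3 := by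
  have h1 := piR_le (p := q+1) (c := q+3) (by omega) hc3
  have h2 := lt_piR (n := n) (y := y) (S := S) (q+1)
  have h3 := cut_piR (n := n) (y := y) (S := S) (q+1)
  rcases (by omega : piR n y S (q+1) = q+2 ∨ piR n y S (q+1) = q+3) with h | h
  · rw [h] at h3; exact absurd h3 hc2
  · exact h

lemma anchor_piL2 {q : ℕ} (hc0 : Cut n y S q) (hc1 : ¬ Cut n y S (q+1)) :
    piL n y S (q+2) = q := by
  have h1 : piL n y S (q+2) ≤ q + 1 := by
    have := Nat.findGreatest_le (P := Cut n y S) (q + 2 - 1)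
    unfold piL; omega
  have h2 := piL_ge (p := q+2) hc0 (by omega)
  have h3 := cut_piL (n := n) (y := y) (S := S) (q+2)
  rcases (by omega : piL n y S (q+2) = q+1 ∨ piL n y S (q+2) = q) with h | h
  · rw [h] at h3; exact absurd h3 hc1
  · exact h

lemma anchor_piR2 {q : ℕ} (hc3 : Cut n y S (q+3)) : piR n y S (q+2) = q + 3 := by
  have h1 := piR_le (p := q+2) (c := q+3) (by omega) hc3
  have h2 := lt_piR (n := n) (y := y) (S := S) (q+2)
  omega

lemma anchor_tf1 {q : ℕ} (hc0 : Cut n y S q) (hc1 : ¬ Cut n y S (q+1))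
    (hc2 : ¬ Cut n y S (q+2)) (hc3 : Cut n y S (q+3)) :
    tf n y S (q+1) = y q + y (q+3) - y (q+2) := by
  rw [tf_of_not_cut hc1, anchor_piL1 hc0 hc1, anchor_piR1 hc3 hc2,
    show q + (q+3) - (q+1) = q+2 by omega]

lemma anchor_tf2 {q : ℕ} (hc0 : Cut n y S q) (hc1 : ¬ Cut n y S (q+1))
    (hc2 : ¬ Cut n y S (q+2)) (hc3 : Cut n y S (q+3)) :
    tf n y S (q+2) = y q + y (q+3) - y (q+1) := by
  rw [tf_of_not_cut hc2, anchor_piL2 hc0 hc1, anchor_piR2 hc3,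
    show q + (q+3) - (q+2) = q+1 by omega]

end Anchor

/-- 2100 pattern occurrence positions. -/
def EmA (n : ℕ) (y : ℕ → ℕ) : Set ℕ :=
  {i | i + 3 < n ∧ y (i+1) < y i ∧ y (i+2) < y (i+1) ∧ y (i+2) = y (i+3)}

/-- 2210 pattern occurrence positions. -/
def EmB (n : ℕ) (y : ℕ → ℕ) : Set ℕ :=
  {i | i + 3 < n ∧ y i = y (i+1) ∧ y (i+2) < y (i+1) ∧ y (i+3) < y (i+2)}

lemma memA {n : ℕ} {y : ℕ → ℕ} {i : ℕ} :
    i ∈ EmA n y ↔ i + 3 < n ∧ y (i+1) < y i ∧ y (i+2) < y (i+1) ∧ y (i+2) = y (i+3) :=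
  Iff.rfl

lemma memB {n : ℕ} {y : ℕ → ℕ} {i : ℕ} :
    i ∈ EmB n y ↔ i + 3 < n ∧ y i = y (i+1) ∧ y (i+2) < y (i+1) ∧ y (i+3) < y (i+2) :=
  Iff.rfl

section AnchorA

variable {n : ℕ} {y : ℕ → ℕ}

lemma ncutA1 {q : ℕ} (hq : q ∈ EmA n y) : ¬ Cut n y (EmA n y) (q+1) := by
  obtain ⟨h0, h1, h2, h3⟩ := memA.mp hq
  rintro (h | h | h | h | h | ⟨hg, h⟩)
  · omega
  · omega
  · rw [show q+1-1 = q by omega] at h; omega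
  · rw [show q+1+1 = q+2 by omega] at h; omega
  · obtain ⟨_, _, hb, _⟩ := memA.mp h
    rw [show q+1+2 = q+3 by omega, show q+1+1 = q+2 by omega] at hb; omega
  · rw [show q+1-3 = q-2 by omega] at h
    obtain ⟨_, _, _, hc⟩ := memA.mp h
    rw [show q-2+2 = q by omega, show q-2+3 = q+1 by omega] at hc; omega

lemma ncutA2 {q : ℕ} (hq : q ∈ EmA n y) : ¬ Cut n y (EmA n y) (q+2) := by
  obtain ⟨h0, h1, h2, h3⟩ := memA.mp hq
  rintro (h | h | h | h | h | ⟨hg, h⟩)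
  · omega
  · omega
  · rw [show q+2-1 = q+1 by omega] at h; omega
  · rw [show q+2+1 = q+3 by omega] at h; omega
  · obtain ⟨_, hb, _, _⟩ := memA.mp h
    rw [show q+2+1 = q+3 by omega] at hb; omega
  · rw [show q+2-3 = q-1 by omega] at h
    obtain ⟨_, _, _, hc⟩ := memA.mp h
    rw [show q-1+2 = q+1 by omega, show q-1+3 = q+2 by omega] at hc; omega

lemma anchorA_tf1 {q : ℕ} (hq : q ∈ EmA n y) : tf n y (EmA n y) (q+1) = y q := by
  obtain ⟨h0, h1, h2, h3⟩ := memA.mp hq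
  rw [anchor_tf1 (cut_of_mem n y _ hq) (ncutA1 hq) (ncutA2 hq) (cut_of_mem3 n y _ hq)]
  omega

lemma anchorA_tf2 {q : ℕ} (hq : q ∈ EmA n y) :
    tf n y (EmA n y) (q+2) = y q + y (q+3) - y (q+1) :=
  anchor_tf2 (cut_of_mem n y _ hq) (ncutA1 hq) (ncutA2 hq) (cut_of_mem3 n y _ hq)

end AnchorA

section AnchorB

variable {n : ℕ} {y : ℕ → ℕ}

lemma ncutB1 {q : ℕ} (hq : q ∈ EmB n y) : ¬ Cut n y (EmB n y) (q+1) := by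
  obtain ⟨h0, h1, h2, h3⟩ := memB.mp hq
  rintro (h | h | h | h | h | ⟨hg, h⟩)
  · omega
  · omega
  · rw [show q+1-1 = q by omega] at h; omega
  · rw [show q+1+1 = q+2 by omega] at h; omega
  · obtain ⟨_, hb, _, _⟩ := memB.mp h
    rw [show q+1+1 = q+2 by omega] at hb; omega
  · rw [show q+1-3 = q-2 by omega] at h
    obtain ⟨_, _, _, hc⟩ := memB.mp h
    rw [show q-2+3 = q+1 by omega, show q-2+2 = q by omega] at hc; omega

lemma ncutB2 {q : ℕ} (hq : q ∈ EmB n y) : ¬ Cut n y (EmB n y) (q+2) := by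
  obtain ⟨h0, h1, h2, h3⟩ := memB.mp hq
  rintro (h | h | h | h | h | ⟨hg, h⟩)
  · omega
  · omega
  · rw [show q+2-1 = q+1 by omega] at h; omega
  · rw [show q+2+1 = q+3 by omega] at h; omega
  · obtain ⟨_, hb, _, _⟩ := memB.mp h
    rw [show q+2+1 = q+3 by omega] at hb; omega
  · rw [show q+2-3 = q-1 by omega] at h
    obtain ⟨_, _, hc, _⟩ := memB.mp h
    rw [show q-1+2 = q+1 by omega, show q-1+1 = q by omega] at hc; omega

lemma anchorB_tf1 {q : ℕ} (hq : q ∈ EmB n y) :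
    tf n y (EmB n y) (q+1) = y q + y (q+3) - y (q+2) :=
  anchor_tf1 (cut_of_mem n y _ hq) (ncutB1 hq) (ncutB2 hq) (cut_of_mem3 n y _ hq)

lemma anchorB_tf2 {q : ℕ} (hq : q ∈ EmB n y) : tf n y (EmB n y) (q+2) = y (q+3) := by
  obtain ⟨h0, h1, h2, h3⟩ := memB.mp hq
  rw [anchor_tf2 (cut_of_mem n y _ hq) (ncutB1 hq) (ncutB2 hq) (cut_of_mem3 n y _ hq)]
  omega

end AnchorB

theorem mainA (n : ℕ) (y : ℕ → ℕ) : EmB n (tf n y (EmA n y)) = EmA n y := by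
  ext p
  constructor
  · intro hp
    obtain ⟨hn, hE, hD1, hD2⟩ := memB.mp hp
    have nc1 : ¬ Cut n y (EmA n y) (p+1) := by
      rintro (h | h | h | h | h | ⟨hg, h⟩)
      · omega
      · omega
      · rw [show p+1-1 = p by omega] at h
        rw [tf_of_cut (cut_of_asc1 n y _ h), tf_of_cut (cut_of_asc2 n y _ h)] at hE
        omega
      · rw [show p+1+1 = p+2 by omega] at h
        have c1 : Cut n y (EmA n y) (p+1) := cut_of_asc1 n y _ h
        have c2 : Cut n y (EmA n y) (p+2) := cut_of_asc2 n y _ h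
        rw [tf_of_cut c1, tf_of_cut c2] at hD1
        omega
      · have t2 : tf n y (EmA n y) (p+2) = y (p+1) := anchorA_tf1 h
        rw [tf_of_cut (cut_of_mem n y _ h), t2] at hD1
        omega
      · rw [show p+1-3 = p-2 by omega] at h
        obtain ⟨a0, a1, a2, a3⟩ := memA.mp h
        have t2 := anchorA_tf2 h
        have c3 := cut_of_mem3 n y _ h
        rw [show p-2+2 = p by omega, show p-2+3 = p+1 by omega] at t2
        rw [show p-2+3 = p+1 by omega] at c3
        rw [t2, tf_of_cut c3] at hE
        omega
    have nc2 : ¬ Cut n y (EmA n y) (p+2) := by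
      rintro (h | h | h | h | h | ⟨hg, h⟩)
      · omega
      · omega
      · rw [show p+2-1 = p+1 by omega] at h
        exact nc1 (cut_of_asc1 n y _ h)
      · rw [show p+2+1 = p+3 by omega] at h
        have c1 : Cut n y (EmA n y) (p+2) := cut_of_asc1 n y _ h
        have c2 : Cut n y (EmA n y) (p+3) := cut_of_asc2 n y _ h
        rw [tf_of_cut c1, tf_of_cut c2] at hD2
        omega
      · have t2 : tf n y (EmA n y) (p+3) = y (p+2) := anchorA_tf1 h
        rw [tf_of_cut (cut_of_mem n y _ h), t2] at hD2
        omega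
      · rw [show p+2-3 = p-1 by omega] at h
        obtain ⟨a0, a1, a2, a3⟩ := memA.mp h
        have t1 := anchorA_tf1 h
        have t2 := anchorA_tf2 h
        rw [show p-1+1 = p by omega] at t1
        rw [show p-1+2 = p+1 by omega, show p-1+3 = p+2 by omega, show p-1+1 = p by omega] at t2
        rw [show p-1+1 = p by omega] at a1
        rw [show p-1+2 = p+1 by omega, show p-1+1 = p by omega] at a2
        rw [show p-1+2 = p+1 by omega, show p-1+3 = p+2 by omega] at a3
        rw [t1, t2] at hE
        omega
    have hAle : piL n y (EmA n y) (p+1) ≤ p := by have := piL_lt nc1; omega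
    have hBge : p + 3 ≤ piR n y (EmA n y) (p+1) := by
      have h1 := lt_piR (n := n) (y := y) (S := EmA n y) (p+1)
      have h2 := cut_piR (n := n) (y := y) (S := EmA n y) (p+1)
      by_contra hcon
      have : piR n y (EmA n y) (p+1) = p+2 := by omega
      rw [this] at h2
      exact nc2 h2
    have hBn : piR n y (EmA n y) (p+1) < n := by
      have h1 := piR_le (p := p+1) (c := n-1) (by omega) (cut_of_big n y (EmA n y) (by omega))
      omega
    obtain ⟨s, hs⟩ : ∃ s, piL n y (EmA n y) (p+1) + piR n y (EmA n y) (p+1) = s + (p+3) :=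
      ⟨piL n y (EmA n y) (p+1) + piR n y (EmA n y) (p+1) - (p+3), by omega⟩
    have f0 := tf_formula nc1 (u := p) (by omega) (by omega)
    have f1 := tf_formula nc1 (u := p+1) (by omega) (by omega)
    have f2 := tf_formula nc1 (u := p+2) (by omega) (by omega)
    have f3 := tf_formula nc1 (u := p+3) (by omega) (by omega)
    rw [hs, show s + (p+3) - p = s+3 by omega] at f0
    rw [hs, show s + (p+3) - (p+1) = s+2 by omega] at f1
    rw [hs, show s + (p+3) - (p+2) = s+1 by omega] at f2
    rw [hs, show s + (p+3) - (p+3) = s by omega] at f3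
    have m0 : y (s+3) ≤ y (piL n y (EmA n y) (p+1)) := piece_anti nc1 le_rfl (by omega) (by omega)
    have m1 : y (s+2) ≤ y (piL n y (EmA n y) (p+1)) := piece_anti nc1 le_rfl (by omega) (by omega)
    have m2 : y (s+1) ≤ y (piL n y (EmA n y) (p+1)) := piece_anti nc1 le_rfl (by omega) (by omega)
    have m3 : y s ≤ y (piL n y (EmA n y) (p+1)) := piece_anti nc1 le_rfl (by omega) (by omega)
    have L0 : y (s+2) = y (s+3) := by omega
    have L1 : y (s+2) < y (s+1) := by omega
    have L2 : y (s+1) < y s := by omega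
    have hsS : s ∈ EmA n y := memA.mpr ⟨by omega, L2, L1, L0⟩
    have e1 : s + 3 = piR n y (EmA n y) (p+1) := by
      by_contra hne
      exact no_int nc1 (show piL n y (EmA n y) (p+1) < s+3 by
          have := lt_piR (n := n) (y := y) (S := EmA n y) (p+1); omega)
        (by omega) (cut_of_mem3 n y _ hsS)
    have e2 : s = piL n y (EmA n y) (p+1) := by
      by_contra hne
      exact no_int nc1 (by omega) (by omega) (cut_of_mem n y _ hsS)
    have : p = s := by omega
    rw [this]
    exact hsS
  · intro hq
    obtain ⟨h0, h1, h2, h3⟩ := memA.mp hq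
    have c0 := cut_of_mem n y (EmA n y) hq
    have c3 := cut_of_mem3 n y (EmA n y) hq
    have t1 := anchorA_tf1 hq
    have t2 := anchorA_tf2 hq
    refine memB.mpr ⟨h0, ?_, ?_, ?_⟩
    · rw [tf_of_cut c0, t1]
    · rw [t1, t2]; omega
    · rw [t2, tf_of_cut c3]; omega

theorem mainB (n : ℕ) (y : ℕ → ℕ) : EmA n (tf n y (EmB n y)) = EmB n y := by
  ext p
  constructor
  · intro hp
    obtain ⟨hn, hD0, hD1, hE⟩ := memA.mp hp
    have nc1 : ¬ Cut n y (EmB n y) (p+1) := by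
      rintro (h | h | h | h | h | ⟨hg, h⟩)
      · omega
      · omega
      · rw [show p+1-1 = p by omega] at h
        rw [tf_of_cut (cut_of_asc1 n y _ h), tf_of_cut (cut_of_asc2 n y _ h)] at hD0
        omega
      · rw [show p+1+1 = p+2 by omega] at h
        have c1 : Cut n y (EmB n y) (p+1) := cut_of_asc1 n y _ h
        have c2 : Cut n y (EmB n y) (p+2) := cut_of_asc2 n y _ h
        rw [tf_of_cut c1, tf_of_cut c2] at hD1
        omega
      · obtain ⟨b0, b1, b2, b3⟩ := memB.mp h
        have b1' : y (p+1) = y (p+2) := b1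
        have b2' : y (p+3) < y (p+2) := b2
        have b3' : y (p+4) < y (p+3) := b3
        have t1 : tf n y (EmB n y) (p+2) = y (p+1) + y (p+4) - y (p+3) := anchorB_tf1 h
        have t2 : tf n y (EmB n y) (p+3) = y (p+4) := anchorB_tf2 h
        rw [t1, t2] at hE
        omega
      · rw [show p+1-3 = p-2 by omega] at h
        have t2 := anchorB_tf2 h
        have c3 := cut_of_mem3 n y _ h
        rw [show p-2+2 = p by omega, show p-2+3 = p+1 by omega] at t2
        rw [show p-2+3 = p+1 by omega] at c3
        rw [t2, tf_of_cut c3] at hD0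
        omega
    have nc2 : ¬ Cut n y (EmB n y) (p+2) := by
      rintro (h | h | h | h | h | ⟨hg, h⟩)
      · omega
      · omega
      · rw [show p+2-1 = p+1 by omega] at h
        exact nc1 (cut_of_asc1 n y _ h)
      · rw [show p+2+1 = p+3 by omega] at h
        have c1 : Cut n y (EmB n y) (p+2) := cut_of_asc1 n y _ h
        have c2 : Cut n y (EmB n y) (p+3) := cut_of_asc2 n y _ h
        rw [tf_of_cut c1, tf_of_cut c2] at hE
        omega
      · obtain ⟨b0, b1, b2, b3⟩ := memB.mp h
        have b1' : y (p+2) = y (p+3) := b1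
        have b2' : y (p+4) < y (p+3) := b2
        have b3' : y (p+5) < y (p+4) := b3
        have t1 : tf n y (EmB n y) (p+3) = y (p+2) + y (p+5) - y (p+4) := anchorB_tf1 h
        rw [tf_of_cut (cut_of_mem n y _ h), t1] at hE
        omega
      · rw [show p+2-3 = p-1 by omega] at h
        have t2 := anchorB_tf2 h
        have c3 := cut_of_mem3 n y _ h
        rw [show p-1+2 = p+1 by omega, show p-1+3 = p+2 by omega] at t2
        rw [show p-1+3 = p+2 by omega] at c3
        rw [t2, tf_of_cut c3] at hD1
        omega
    have hAle : piL n y (EmB n y) (p+1) ≤ p := by have := piL_lt nc1; omega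
    have hBge : p + 3 ≤ piR n y (EmB n y) (p+1) := by
      have h1 := lt_piR (n := n) (y := y) (S := EmB n y) (p+1)
      have h2 := cut_piR (n := n) (y := y) (S := EmB n y) (p+1)
      by_contra hcon
      have : piR n y (EmB n y) (p+1) = p+2 := by omega
      rw [this] at h2
      exact nc2 h2
    have hBn : piR n y (EmB n y) (p+1) < n := by
      have h1 := piR_le (p := p+1) (c := n-1) (by omega) (cut_of_big n y (EmB n y) (by omega))
      omega
    obtain ⟨s, hs⟩ : ∃ s, piL n y (EmB n y) (p+1) + piR n y (EmB n y) (p+1) = s + (p+3) :=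
      ⟨piL n y (EmB n y) (p+1) + piR n y (EmB n y) (p+1) - (p+3), by omega⟩
    have f0 := tf_formula nc1 (u := p) (by omega) (by omega)
    have f1 := tf_formula nc1 (u := p+1) (by omega) (by omega)
    have f2 := tf_formula nc1 (u := p+2) (by omega) (by omega)
    have f3 := tf_formula nc1 (u := p+3) (by omega) (by omega)
    rw [hs, show s + (p+3) - p = s+3 by omega] at f0
    rw [hs, show s + (p+3) - (p+1) = s+2 by omega] at f1
    rw [hs, show s + (p+3) - (p+2) = s+1 by omega] at f2
    rw [hs, show s + (p+3) - (p+3) = s by omega] at f3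
    have m0 : y (s+3) ≤ y (piL n y (EmB n y) (p+1)) := piece_anti nc1 le_rfl (by omega) (by omega)
    have m1 : y (s+2) ≤ y (piL n y (EmB n y) (p+1)) := piece_anti nc1 le_rfl (by omega) (by omega)
    have m2 : y (s+1) ≤ y (piL n y (EmB n y) (p+1)) := piece_anti nc1 le_rfl (by omega) (by omega)
    have m3 : y s ≤ y (piL n y (EmB n y) (p+1)) := piece_anti nc1 le_rfl (by omega) (by omega)
    have L0 : y (s+3) < y (s+2) := by omega
    have L1 : y (s+2) < y (s+1) := by omega
    have L2 : y s = y (s+1) := by omega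
    have hsS : s ∈ EmB n y := memB.mpr ⟨by omega, L2, L1, L0⟩
    have e1 : s + 3 = piR n y (EmB n y) (p+1) := by
      by_contra hne
      exact no_int nc1 (show piL n y (EmB n y) (p+1) < s+3 by
          have := lt_piR (n := n) (y := y) (S := EmB n y) (p+1); omega)
        (by omega) (cut_of_mem3 n y _ hsS)
    have e2 : s = piL n y (EmB n y) (p+1) := by
      by_contra hne
      exact no_int nc1 (by omega) (by omega) (cut_of_mem n y _ hsS)
    have : p = s := by omega
    rw [this]
    exact hsS
  · intro hq
    obtain ⟨h0, h1, h2, h3⟩ := memB.mp hq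
    have c0 := cut_of_mem n y (EmB n y) hq
    have c3 := cut_of_mem3 n y (EmB n y) hq
    have t1 := anchorB_tf1 hq
    have t2 := anchorB_tf2 hq
    refine memA.mpr ⟨h0, ?_, ?_, ?_⟩
    · rw [tf_of_cut c0, t1]; omega
    · rw [t1, t2]; omega
    · rw [t2, tf_of_cut c3]


section Pack

variable {n : ℕ}

lemma ev_le (e : InvSeq n) (p : ℕ) : ev e p ≤ p := by
  unfold ev
  split
  · next h => have h2 : (e ⟨p, h⟩).val < p + 1 := (e ⟨p, h⟩).isLt; omega
  · omega

/-- The bijection 2100 → 2210. -/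
noncomputable def Phi (e : InvSeq n) : InvSeq n := fun i =>
  ⟨tf n (ev e) (EmA n (ev e)) i.val, by
    have h1 := tf_le_self (n := n) (S := EmA n (ev e)) (fun q => ev_le e q) i.val
    omega⟩

/-- The bijection 2210 → 2100. -/
noncomputable def Psi (e : InvSeq n) : InvSeq n := fun i =>
  ⟨tf n (ev e) (EmB n (ev e)) i.val, by
    have h1 := tf_le_self (n := n) (S := EmB n (ev e)) (fun q => ev_le e q) i.val
    omega⟩

lemma ev_Phi (e : InvSeq n) : ev (Phi e) = tf n (ev e) (EmA n (ev e)) := by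
  funext p
  by_cases h : p < n
  · show dite _ _ _ = _
    rw [dif_pos h]
    rfl
  · have h1 : ev (Phi e) p = 0 := dif_neg h
    have h2 : ev e p = 0 := dif_neg h
    rw [h1, tf_of_cut (cut_of_big n (ev e) (EmA n (ev e)) (by omega)), h2]

lemma ev_Psi (e : InvSeq n) : ev (Psi e) = tf n (ev e) (EmB n (ev e)) := by
  funext p
  by_cases h : p < n
  · show dite _ _ _ = _
    rw [dif_pos h]
    rfl
  · have h1 : ev (Psi e) p = 0 := dif_neg h
    have h2 : ev e p = 0 := dif_neg h
    rw [h1, tf_of_cut (cut_of_big n (ev e) (EmB n (ev e)) (by omega)), h2]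

lemma Em2100_eq (e : InvSeq n) : Em2100 e = EmA n (ev e) := rfl

lemma Em2210_eq (e : InvSeq n) : Em2210 e = EmB n (ev e) := rfl

lemma Em2210_Phi (e : InvSeq n) : Em2210 (Phi e) = Em2100 e := by
  rw [Em2210_eq, ev_Phi, mainA, Em2100_eq]

lemma Em2100_Psi (e : InvSeq n) : Em2100 (Psi e) = Em2210 e := by
  rw [Em2100_eq, ev_Psi, mainB, Em2210_eq]

lemma ev_apply (e : InvSeq n) (i : Fin n) : ev e i.val = (e i).val := by
  unfold ev
  rw [dif_pos i.isLt]

lemma Psi_Phi (e : InvSeq n) : Psi (Phi e) = e := by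
  funext i
  apply Fin.ext
  show tf n (ev (Phi e)) (EmB n (ev (Phi e))) i.val = (e i).val
  rw [ev_Phi, mainA, tf_tf, ev_apply]

lemma Phi_Psi (e : InvSeq n) : Phi (Psi e) = e := by
  funext i
  apply Fin.ext
  show tf n (ev (Psi e)) (EmA n (ev (Psi e))) i.val = (e i).val
  rw [ev_Psi, mainB, tf_tf, ev_apply]

end Pack

end SSW

/-- Super strong Wilf equivalence of 2100 and 2210. -/
theorem superStrongWilf_2100_2210 (n : ℕ) (T : Set ℕ) :
    Nat.card {e : InvSeq n // Em2100 e = T} = Nat.card {e : InvSeq n // Em2210 e = T} := by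
  refine Nat.card_congr
    ⟨fun x => ⟨SSW.Phi x.1, by rw [SSW.Em2210_Phi]; exact x.2⟩,
     fun x => ⟨SSW.Psi x.1, by rw [SSW.Em2100_Psi]; exact x.2⟩,
     fun x => Subtype.ext (SSW.Psi_Phi x.1),
     fun x => Subtype.ext (SSW.Phi_Psi x.1)⟩
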